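/- (Weighted L¹ tail estimate, from the proof of Theorem 5.1) There is a universal constant C > 0 with the following property. Let 0 ≤ α < 1, let R ≥ 1, and let f : ℝ² → ℝ be measurable with M := sup_{r ≥ R} ( r^{-(2+2α)} ∫_{B(0,r)} |f|² )^{1/2} < ∞. Then ∫_{|y| ≥ R} |f(y)| (1 + |y|²)^{-3/2} dy ≤ (C/(1 − α)) R^{α−1} M. -/

import Mathlib

open MeasureTheory Metric ENNReal

noncomputable section

/-- The plane `ℝ²` as a Euclidean space. -/
abbrev E2 := EuclideanSpace ℝ (Fin 2)

/-- Truncated local Morrey `L²` norm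
`sup_{r ≥ R} ( r^{-(d+2α)} ∫_{B(0,r)} |f|² )^{1/2}`, valued in `ℝ≥0∞`. -/
def morreyR {d : ℕ} {F : Type*} [NormedAddCommGroup F] (α R : ℝ)
    (f : EuclideanSpace ℝ (Fin d) → F) : ℝ≥0∞ :=
  ⨆ r : {r : ℝ // R ≤ r},
    ((∫⁻ x in ball (0 : EuclideanSpace ℝ (Fin d)) (r : ℝ), (‖f x‖₊ : ℝ≥0∞) ^ 2) /
      ENNReal.ofReal ((r : ℝ) ^ ((d : ℝ) + 2 * α))) ^ ((1 : ℝ) / 2)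

open Set in
lemma layercake' {a : ℝ} (ha : 0 < a) :
    ENNReal.ofReal (a ^ (-3:ℝ)) = ∫⁻ r in Set.Ioi a, ENNReal.ofReal (3 * r ^ (-4:ℝ)) := by
  rw [← MeasureTheory.ofReal_integral_eq_lintegral_ofReal]
  · congr 1
    rw [MeasureTheory.integral_const_mul, integral_Ioi_rpow_of_lt (by norm_num) ha]
    norm_num
    ring
  · exact (integrableOn_Ioi_rpow_of_lt (by norm_num) ha).const_mul 3
  · filter_upwards [self_mem_ae_restrict measurableSet_Ioi] with t ht
    have : (0:ℝ) < t := ha.trans ht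
    positivity

open Set in
lemma tailint' {α R : ℝ} (hα : α < 1) (hR : 0 < R) :
    (∫⁻ r in Set.Ioi R, ENNReal.ofReal (3 * r ^ (α - 2))) =
      ENNReal.ofReal (3 / (1 - α) * R ^ (α - 1)) := by
  rw [← MeasureTheory.ofReal_integral_eq_lintegral_ofReal]
  · congr 1
    rw [MeasureTheory.integral_const_mul, integral_Ioi_rpow_of_lt (by linarith) hR]
    have h0 : α - 2 + 1 = α - 1 := by ring
    rw [h0]
    have h1 : α - 1 ≠ 0 := by linarith
    have h2 : (1:ℝ) - α ≠ 0 := by linarith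
    field_simp
    ring
  · exact (integrableOn_Ioi_rpow_of_lt (by linarith) hR).const_mul 3
  · filter_upwards [self_mem_ae_restrict measurableSet_Ioi] with t ht
    have : (0:ℝ) < t := hR.trans ht
    positivity

lemma morrey_ball_bound {α R : ℝ} (hR : 1 ≤ R) (f : E2 → ℝ)
    (hf : Measurable f) {r : ℝ} (hr : R ≤ r) :
    (∫⁻ y in ball (0:E2) r, (‖f y‖₊ : ℝ≥0∞)) ≤
      morreyR α R f * (volume (ball (0:E2) 1)) ^ ((1:ℝ)/2) * ENNReal.ofReal (r ^ (2 + α)) := by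
  have hr0 : (0:ℝ) < r := lt_of_lt_of_le one_pos (hR.trans hr)
  set M := morreyR α R f with hMdef
  set K := volume (ball (0:E2) 1) with hK
  set b := ENNReal.ofReal (r ^ (((2:ℕ):ℝ) + 2 * α)) with hb
  have hb0 : b ≠ 0 := (ENNReal.ofReal_pos.mpr (Real.rpow_pos_of_pos hr0 _)).ne'
  have hbt : b ≠ ⊤ := ENNReal.ofReal_ne_top
  set I2 := ∫⁻ x in ball (0:E2) r, (‖f x‖₊ : ℝ≥0∞) ^ 2 with hI2
  have hM : (I2 / b) ^ ((1:ℝ)/2) ≤ M := le_iSup (fun p : {r : ℝ // R ≤ r} =>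
      ((∫⁻ x in ball (0 : E2) (p : ℝ), (‖f x‖₊ : ℝ≥0∞) ^ 2) /
        ENNReal.ofReal ((p : ℝ) ^ (((2:ℕ) : ℝ) + 2 * α))) ^ ((1 : ℝ) / 2)) ⟨r, hr⟩
  have hdiv : I2 / b ≤ M ^ (2:ℝ) := by
    have := ENNReal.rpow_le_rpow hM (by norm_num : (0:ℝ) ≤ 2)
    rwa [← ENNReal.rpow_mul, show (1:ℝ)/2 * 2 = 1 by norm_num, ENNReal.rpow_one] at this
  have hI : I2 ≤ M ^ (2:ℝ) * b := by
    calc I2 = I2 / b * b := (ENNReal.div_mul_cancel hb0 hbt).symm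
    _ ≤ M ^ (2:ℝ) * b := mul_le_mul_left hdiv b
  have hpq : Real.HolderConjugate 2 2 := ⟨by norm_num, by norm_num, by norm_num⟩
  have hCS := ENNReal.lintegral_mul_le_Lp_mul_Lq (volume.restrict (ball (0:E2) r)) hpq
      (f := fun y => (‖f y‖₊ : ℝ≥0∞)) (g := 1)
      (hf.enorm.aemeasurable) aemeasurable_const
  simp only [Pi.mul_apply, Pi.one_apply, mul_one, ENNReal.one_rpow, lintegral_one,
    Measure.restrict_apply MeasurableSet.univ, Set.univ_inter] at hCS
  simp only [show ((2:ℝ)) = ((2:ℕ):ℝ) by norm_num, ENNReal.rpow_natCast] at hCS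
  have hb12 : b ^ ((1:ℝ)/2) = ENNReal.ofReal (r ^ (1 + α)) := by
    rw [hb, ENNReal.ofReal_rpow_of_nonneg (Real.rpow_pos_of_pos hr0 _).le (by norm_num),
      ← Real.rpow_mul hr0.le]
    congr 1
    push_cast
    ring_nf
  have hvol : volume (ball (0:E2) r) = ENNReal.ofReal (r ^ (2:ℕ)) * K := by
    rw [hK, Measure.addHaar_ball volume (0:E2) hr0.le, finrank_euclideanSpace]
    simp
  have hvol12 : (volume (ball (0:E2) r)) ^ ((1:ℝ)/2) = ENNReal.ofReal r * K ^ ((1:ℝ)/2) := by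
    rw [hvol, ENNReal.mul_rpow_of_nonneg _ _ (by norm_num : (0:ℝ) ≤ 1/2)]
    congr 1
    rw [← Real.rpow_natCast r 2,
      ENNReal.ofReal_rpow_of_nonneg (Real.rpow_pos_of_pos hr0 _).le (by norm_num),
      ← Real.rpow_mul hr0.le]
    norm_num
  have hI12 : I2 ^ ((1:ℝ)/2) ≤ M * ENNReal.ofReal (r ^ (1+α)) := by
    calc I2 ^ ((1:ℝ)/2) ≤ (M ^ (2:ℝ) * b) ^ ((1:ℝ)/2) :=
          ENNReal.rpow_le_rpow hI (by norm_num)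
    _ = M * b ^ ((1:ℝ)/2) := by
        rw [ENNReal.mul_rpow_of_nonneg _ _ (by norm_num : (0:ℝ) ≤ 1/2), ← ENNReal.rpow_mul]
        norm_num
    _ = M * ENNReal.ofReal (r ^ (1+α)) := by rw [hb12]
  calc (∫⁻ y in ball (0:E2) r, (‖f y‖₊ : ℝ≥0∞))
      ≤ I2 ^ ((1:ℝ)/2) * (volume (ball (0:E2) r)) ^ ((1:ℝ)/2) := hCS
  _ ≤ (M * ENNReal.ofReal (r ^ (1+α))) * (ENNReal.ofReal r * K ^ ((1:ℝ)/2)) :=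
      mul_le_mul' hI12 (le_of_eq hvol12)
  _ = M * K ^ ((1:ℝ)/2) * (ENNReal.ofReal (r ^ (1+α)) * ENNReal.ofReal r) := by ring
  _ = M * K ^ ((1:ℝ)/2) * ENNReal.ofReal (r ^ (2 + α)) := by
      congr 1
      rw [← ENNReal.ofReal_mul (by positivity)]
      congr 1
      rw [show r ^ (1+α) * r = r ^ (1+α) * r ^ (1:ℝ) by rw [Real.rpow_one],
        ← Real.rpow_add hr0]
      ring_nf

open Set in
/-- Weighted `L¹` tail estimate (from the proof of Theorem 5.1):
`∫_{|y| ≥ R} |f(y)| ⟨y⟩^{-3} dy ≤ (C/(1−α)) R^{α−1} M` where `M` is the truncated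
Morrey norm of `f` of growth `α` at radius `R ≥ 1`, and `0 ≤ α < 1`. -/
theorem weighted_tail_estimate :
    ∃ C : ℝ, 0 < C ∧
      ∀ (α : ℝ), 0 ≤ α → α < 1 →
      ∀ R : ℝ, 1 ≤ R →
      ∀ f : E2 → ℝ, Measurable f →
        morreyR α R f < ⊤ →
        (∫⁻ y in {y : E2 | R ≤ ‖y‖},
            (‖f y‖₊ : ℝ≥0∞) * ENNReal.ofReal ((1 + ‖y‖ ^ 2) ^ (-(3 : ℝ) / 2))) ≤
          ENNReal.ofReal (C / (1 - α) * R ^ (α - 1)) * morreyR α R f := by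
  set K := volume (ball (0:E2) 1) with hK
  have hK0 : K ≠ 0 := (measure_ball_pos volume _ one_pos).ne'
  have hKt : K ≠ ⊤ := measure_ball_lt_top.ne
  set Kh := K ^ ((1:ℝ)/2) with hKh
  have hKh0 : Kh ≠ 0 := by
    simp only [hKh, ne_eq, ENNReal.rpow_eq_zero_iff, not_or]
    push_neg
    exact ⟨fun h => absurd h hK0, fun h => absurd h hKt⟩
  have hKht : Kh ≠ ⊤ := by
    simp only [hKh, ne_eq, ENNReal.rpow_eq_top_iff, not_or]
    push_neg
    exact ⟨fun h => absurd h hK0, fun h => absurd h hKt⟩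
  have hKhr : (0:ℝ) < Kh.toReal := ENNReal.toReal_pos hKh0 hKht
  refine ⟨3 * Kh.toReal, by positivity, ?_⟩
  intro α hα0 hα1 R hR f hf hMlt
  have hR0 : (0:ℝ) < R := lt_of_lt_of_le one_pos hR
  set M := morreyR α R f with hMdef
  set S := {y : E2 | R ≤ ‖y‖} with hS
  have hSm : MeasurableSet S := measurableSet_le measurable_const measurable_norm
  set G : E2 × ℝ → ℝ≥0∞ := fun p =>
    if ‖p.1‖ < p.2 then (‖f p.1‖₊ : ℝ≥0∞) * ENNReal.ofReal (3 * p.2 ^ (-4:ℝ)) else 0 with hG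
  have hGm : Measurable G := by
    apply Measurable.ite
    · exact measurableSet_lt measurable_fst.norm measurable_snd
    · exact ((hf.comp measurable_fst).enorm).mul (by fun_prop)
    · exact measurable_const
  -- Step 1: pointwise layer cake bound
  have step1 : ∀ y ∈ S, (‖f y‖₊ : ℝ≥0∞) * ENNReal.ofReal ((1 + ‖y‖ ^ 2) ^ (-(3:ℝ)/2)) ≤
      ∫⁻ r in Ioi R, G (y, r) := by
    intro y hy
    have hy' : R ≤ ‖y‖ := hy
    have hy1 : (1:ℝ) ≤ ‖y‖ := hR.trans hy'
    have hy0 : (0:ℝ) < ‖y‖ := lt_of_lt_of_le one_pos hy1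
    have hw : ((1 + ‖y‖ ^ 2) ^ (-(3:ℝ)/2)) ≤ ‖y‖ ^ (-3:ℝ) := by
      have h1 : ‖y‖ ^ (-3:ℝ) = ((‖y‖ ^ 2 : ℝ)) ^ (-(3:ℝ)/2) := by
        rw [← Real.rpow_natCast ‖y‖ 2, ← Real.rpow_mul hy0.le]
        norm_num
      rw [h1]
      exact Real.rpow_le_rpow_of_nonpos (by positivity) (by linarith) (by norm_num)
    calc (‖f y‖₊ : ℝ≥0∞) * ENNReal.ofReal ((1 + ‖y‖ ^ 2) ^ (-(3:ℝ)/2))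
        ≤ (‖f y‖₊ : ℝ≥0∞) * ENNReal.ofReal (‖y‖ ^ (-3:ℝ)) :=
          mul_le_mul_right (ENNReal.ofReal_le_ofReal hw) _
    _ = (‖f y‖₊ : ℝ≥0∞) * ∫⁻ r in Ioi ‖y‖, ENNReal.ofReal (3 * r ^ (-4:ℝ)) := by
          rw [layercake' hy0]
    _ = (‖f y‖₊ : ℝ≥0∞) * ∫⁻ r in Ioi R,
          (Ioi ‖y‖).indicator (fun r => ENNReal.ofReal (3 * r ^ (-4:ℝ))) r := by
          congr 1
          rw [lintegral_indicator measurableSet_Ioi,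
            Measure.restrict_restrict measurableSet_Ioi, Set.Ioi_inter_Ioi,
            sup_eq_left.mpr hy']
    _ = ∫⁻ r in Ioi R, G (y, r) := by
          rw [← lintegral_const_mul' _ _ ENNReal.coe_ne_top]
          apply lintegral_congr
          intro r
          simp only [hG, Set.indicator_apply, mem_Ioi, mul_ite, mul_zero]
  have step2 : (∫⁻ y in S, (‖f y‖₊ : ℝ≥0∞) * ENNReal.ofReal ((1 + ‖y‖ ^ 2) ^ (-(3:ℝ)/2)))
      ≤ ∫⁻ y in S, ∫⁻ r in Ioi R, G (y, r) :=
    setLIntegral_mono (hGm.lintegral_prod_right') step1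
  have step3 : (∫⁻ y in S, ∫⁻ r in Ioi R, G (y, r))
      = ∫⁻ r in Ioi R, ∫⁻ y in S, G (y, r) :=
    lintegral_lintegral_swap hGm.aemeasurable
  have step4 : ∀ r ∈ Ioi R, (∫⁻ y in S, G (y, r)) ≤
      M * Kh * ENNReal.ofReal (3 * r ^ (α - 2)) := by
    intro r hr
    have hrR : R ≤ r := le_of_lt hr
    have hr0 : (0:ℝ) < r := lt_of_lt_of_le one_pos (hR.trans hrR)
    have hind : ∀ y : E2, G (y, r) ≤ (ball (0:E2) r).indicator
        (fun y => (‖f y‖₊ : ℝ≥0∞) * ENNReal.ofReal (3 * r ^ (-4:ℝ))) y := by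
      intro y
      by_cases h : ‖y‖ < r
      · rw [Set.indicator_of_mem (mem_ball_zero_iff.mpr h)]
        simp [hG, h]
      · simp [hG, h]
    calc (∫⁻ y in S, G (y, r))
        ≤ ∫⁻ y in S, (ball (0:E2) r).indicator
            (fun y => (‖f y‖₊ : ℝ≥0∞) * ENNReal.ofReal (3 * r ^ (-4:ℝ))) y :=
          lintegral_mono hind
    _ ≤ ∫⁻ y, (ball (0:E2) r).indicator
            (fun y => (‖f y‖₊ : ℝ≥0∞) * ENNReal.ofReal (3 * r ^ (-4:ℝ))) y :=
          setLIntegral_le_lintegral _ _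
    _ = ∫⁻ y in ball (0:E2) r, (‖f y‖₊ : ℝ≥0∞) * ENNReal.ofReal (3 * r ^ (-4:ℝ)) :=
          lintegral_indicator measurableSet_ball _
    _ = (∫⁻ y in ball (0:E2) r, (‖f y‖₊ : ℝ≥0∞)) * ENNReal.ofReal (3 * r ^ (-4:ℝ)) :=
          lintegral_mul_const _ hf.enorm
    _ ≤ (M * Kh * ENNReal.ofReal (r ^ (2 + α))) * ENNReal.ofReal (3 * r ^ (-4:ℝ)) :=
          mul_le_mul_left (morrey_ball_bound hR f hf hrR) _
    _ = M * Kh * ENNReal.ofReal (3 * r ^ (α - 2)) := by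
          rw [mul_assoc, ← ENNReal.ofReal_mul (by positivity)]
          congr 2
          rw [show r ^ (2 + α) * (3 * r ^ (-4:ℝ)) = 3 * (r ^ (2+α) * r ^ (-4:ℝ)) by ring,
            ← Real.rpow_add hr0]
          ring_nf
  calc (∫⁻ y in S, (‖f y‖₊ : ℝ≥0∞) * ENNReal.ofReal ((1 + ‖y‖ ^ 2) ^ (-(3:ℝ)/2)))
      ≤ ∫⁻ y in S, ∫⁻ r in Ioi R, G (y, r) := step2
  _ = ∫⁻ r in Ioi R, ∫⁻ y in S, G (y, r) := step3
  _ ≤ ∫⁻ r in Ioi R, M * Kh * ENNReal.ofReal (3 * r ^ (α - 2)) :=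
      setLIntegral_mono (by fun_prop) step4
  _ = M * Kh * ∫⁻ r in Ioi R, ENNReal.ofReal (3 * r ^ (α - 2)) :=
      lintegral_const_mul _ (by fun_prop)
  _ = M * Kh * ENNReal.ofReal (3 / (1 - α) * R ^ (α - 1)) := by rw [tailint' hα1 hR0]
  _ = ENNReal.ofReal (3 * Kh.toReal / (1 - α) * R ^ (α - 1)) * M := by
      rw [show 3 * Kh.toReal / (1 - α) * R ^ (α - 1)
          = Kh.toReal * (3 / (1 - α) * R ^ (α - 1)) by ring,
        ENNReal.ofReal_mul ENNReal.toReal_nonneg, ENNReal.ofReal_toReal hKht]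
      ring


end
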